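/- For positive integers n1, n2, n3 with n1 + n2 \ge 2, \int_0^1 B_{n1}(q) B_{n2}(q) B_{n3}(q) dq = (-1)^{n3+1} n3! \sum_{k=0}^{\lfloor (n1+n2-1)/2 \rfloor} [ n1 \binom{n2}{2k} + n2 \binom{n1}{2k} ] \frac{(n1+n2-2k-1)!}{(n1+n2+n3-2k)!} B_{2k} B_{n1+n2+n3-2k}. -/

import Mathlib

open Polynomial Finset intervalIntegral

noncomputable section CarlitzTriple

/-- The Bernoulli polynomial mapped into `ℝ[X]`. -/
def bp (n : ℕ) : ℝ[X] := (Polynomial.bernoulli n).map (algebraMap ℚ ℝ)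

/-- The Bernoulli number as a real number. -/
def bn (n : ℕ) : ℝ := ((bernoulli n : ℚ) : ℝ)

lemma bp_eval_rat (n : ℕ) (q : ℚ) :
    (bp n).eval ((q : ℝ)) = (((Polynomial.bernoulli n).eval q : ℚ) : ℝ) := by
  rw [bp, eval_map]
  have : ((q : ℝ)) = algebraMap ℚ ℝ q := rfl
  rw [this, Polynomial.eval₂_at_apply]
  rfl

lemma bp_eval_zero (n : ℕ) : (bp n).eval 0 = bn n := by
  have := bp_eval_rat n 0
  simpa [bn] using this

lemma bp_eval_one (n : ℕ) (hn : n ≠ 1) : (bp n).eval 1 = bn n := by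
  have := bp_eval_rat n 1
  simp only [Rat.cast_one] at this
  rw [this, Polynomial.bernoulli_eval_one, ← bernoulli_eq_bernoulli'_of_ne_one hn, bn]

lemma derivative_bp (k : ℕ) :
    derivative (bp (k + 1)) = (k + 1 : ℝ[X]) * bp k := by
  rw [bp, derivative_map, Polynomial.derivative_bernoulli_add_one, Polynomial.map_mul, bp]
  congr 1
  simp

lemma coeff_bernoulli (n m : ℕ) :
    (Polynomial.bernoulli n).coeff m =
      if m ≤ n then _root_.bernoulli (n - m) * (n.choose m : ℚ) else 0 := by
  rw [Polynomial.bernoulli_def, finset_sum_coeff]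
  simp only [coeff_monomial]
  rw [Finset.sum_ite_eq' (Finset.range (n+1)) m]
  simp only [Finset.mem_range, Nat.lt_succ_iff]

lemma coeff_bp (n m : ℕ) :
    (bp n).coeff m = if m ≤ n then bn (n - m) * (n.choose m : ℝ) else 0 := by
  rw [bp, coeff_map, _root_.coeff_bernoulli]
  split_ifs with h
  · push_cast [bn]; rfl
  · simp

lemma bp_comp_X_add_one (n : ℕ) :
    (bp n).comp (X + 1) = bp n + (n : ℝ[X]) * X ^ (n - 1) := by
  have hq : (Polynomial.bernoulli n).comp (X + 1) =
      Polynomial.bernoulli n + (n : ℚ[X]) * X ^ (n - 1) := by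
    apply Polynomial.funext
    intro r
    rw [eval_comp]
    simp only [eval_add, eval_X, eval_one, eval_mul, eval_pow, eval_natCast]
    rw [add_comm r 1, Polynomial.bernoulli_eval_one_add]
  have := congrArg (Polynomial.map (algebraMap ℚ ℝ)) hq
  rw [Polynomial.map_comp] at this
  simpa [bp] using this

lemma pII (p : ℝ[X]) : IntervalIntegrable (fun x => p.eval x) MeasureTheory.volume 0 1 :=
  p.continuous.intervalIntegrable _ _

lemma integral_derivative (p : ℝ[X]) :
    ∫ x in (0:ℝ)..1, (derivative p).eval x = p.eval 1 - p.eval 0 := by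
  apply intervalIntegral.integral_deriv_eq_sub' _ (funext fun x => p.deriv)
  · exact fun x _ => p.differentiableAt
  · exact (derivative p).continuous.continuousOn

lemma integral_mul_eval (p q : ℝ[X]) :
    (∫ x in (0:ℝ)..1, p.eval x * q.eval x) = ∫ x in (0:ℝ)..1, (p*q).eval x := by
  simp [eval_mul]

lemma integral_bp (N : ℕ) (hN : 1 ≤ N) : (∫ x in (0:ℝ)..1, (bp N).eval x) = 0 := by
  obtain ⟨k, rfl⟩ := Nat.exists_eq_add_of_le hN
  have h := integral_derivative (bp (1 + k + 1))
  rw [derivative_bp] at h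
  have e1 : (bp (1+k+1)).eval 1 = bn (1+k+1) := bp_eval_one _ (by omega)
  rw [e1, bp_eval_zero, sub_self] at h
  simp only [eval_mul, eval_add, eval_natCast, eval_one] at h
  rw [intervalIntegral.integral_const_mul] at h
  have hne : ((1 + k : ℕ) : ℝ) + 1 ≠ 0 := by positivity
  exact (mul_eq_zero.mp h).resolve_left hne

lemma stepA (n : ℕ) : ∀ (f : ℝ[X]), f.natDegree ≤ n → ∀ N : ℕ, 1 ≤ N →
    (∫ x in (0:ℝ)..1, f.eval x * (bp N).eval x) =
    ∑ j ∈ range (n+1), (-1)^j * ((N.factorial : ℝ) / ((N+j+1).factorial : ℝ)) *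
      ((derivative^[j] f).eval 1 - (derivative^[j] f).eval 0) * bn (N+j+1) := by
  induction n with
  | zero =>
    intro f hf N hN
    have hC := Polynomial.eq_C_of_natDegree_le_zero hf
    rw [hC]
    simp only [eval_C, Finset.sum_range_one, Function.iterate_zero, id_eq, sub_self,
      mul_zero, zero_mul]
    rw [intervalIntegral.integral_const_mul, integral_bp N hN, mul_zero]
    simp
  | succ n ih =>
    intro f hf N hN
    -- integration by parts
    have hD : derivative (f * bp (N+1)) =
        derivative f * bp (N+1) + ((N:ℝ[X])+1) * (f * bp N) := by
      rw [derivative_mul, derivative_bp N]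
      ring
    have hI := integral_derivative (f * bp (N+1))
    rw [hD] at hI
    simp only [eval_add, eval_mul, eval_natCast, eval_one] at hI
    rw [intervalIntegral.integral_add (f := fun x => (derivative f).eval x * (bp (N+1)).eval x)
        (g := fun x => ((N:ℝ)+1) * (f.eval x * (bp N).eval x))
        (((derivative f).continuous.mul (bp (N+1)).continuous).intervalIntegrable _ _)
        ((continuous_const.mul (f.continuous.mul (bp N).continuous)).intervalIntegrable _ _)] at hI
    · rw [intervalIntegral.integral_const_mul] at hI
      have hN1 : ((N:ℝ) + 1) ≠ 0 := by positivity
      have heq : (∫ x in (0:ℝ)..1, f.eval x * (bp N).eval x) =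
          ((f.eval 1 * (bp (N+1)).eval 1 - f.eval 0 * (bp (N+1)).eval 0)
            - ∫ x in (0:ℝ)..1, (derivative f).eval x * (bp (N+1)).eval x) / ((N:ℝ)+1) := by
        field_simp
        linarith [hI]
      rw [heq, bp_eval_one (N+1) (by omega), bp_eval_zero,
        ih (derivative f) (by
          have := f.natDegree_derivative_le
          omega) (N+1) (by omega)]
      conv_rhs => rw [Finset.sum_range_succ']
      have hterm : ∀ j, (-1:ℝ)^(j+1) * ((N.factorial : ℝ) / (((N+(j+1)+1).factorial : ℝ)))
            * ((derivative^[j+1] f).eval 1 - (derivative^[j+1] f).eval 0) * bn (N+(j+1)+1)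
          = -((-1:ℝ)^j * (((N+1).factorial : ℝ) / (((N+1)+j+1).factorial : ℝ))
            * ((derivative^[j] (derivative f)).eval 1 - (derivative^[j] (derivative f)).eval 0)
            * bn ((N+1)+j+1)) / ((N:ℝ)+1) := by
        intro j
        rw [Function.iterate_succ_apply]
        have h1 : N+(j+1)+1 = (N+1)+j+1 := by omega
        rw [h1]
        have h2 : (((N+1).factorial : ℝ)) = ((N:ℝ)+1) * (N.factorial : ℝ) := by
          rw [Nat.factorial_succ]; push_cast; ring
        rw [h2]
        have h3 : (((N+1)+j+1).factorial : ℝ) ≠ 0 := by positivity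
        field_simp
        ring
      rw [Finset.sum_congr rfl (fun j _ => hterm j), ← Finset.sum_div,
        Finset.sum_neg_distrib]
      have h0 : N + 0 + 1 = N + 1 := by omega
      rw [h0]
      have h4 : ((N+1).factorial : ℝ) = ((N:ℝ)+1) * (N.factorial : ℝ) := by
        rw [Nat.factorial_succ]; push_cast; ring
      have h5 : (N.factorial : ℝ) ≠ 0 := by positivity
      have h6 : ((N:ℝ)+1) ≠ 0 := by positivity
      simp only [Function.iterate_zero, id_eq, pow_zero, one_mul, h4]
      field_simp
      ring

lemma iterate_derivative_comp_X_add_one (p : ℝ[X]) (j : ℕ) :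
    derivative^[j] (p.comp (X + 1)) = (derivative^[j] p).comp (X + 1) := by
  induction j with
  | zero => simp
  | succ j ih =>
      rw [Function.iterate_succ_apply', ih, derivative_comp,
        Function.iterate_succ_apply']
      simp

lemma eval_diff_iterate (p : ℝ[X]) (j : ℕ) :
    (derivative^[j] p).eval 1 - (derivative^[j] p).eval 0
      = (j.factorial : ℝ) * (p.comp (X + 1) - p).coeff j := by
  have hsub : derivative^[j] (p.comp (X + 1) - p)
      = derivative^[j] (p.comp (X + 1)) - derivative^[j] p := by
    induction j with
    | zero => simp
    | succ j ih =>
        rw [Function.iterate_succ_apply', ih, derivative_sub,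
          Function.iterate_succ_apply', Function.iterate_succ_apply']
  have h0 : ((derivative^[j] (p.comp (X + 1) - p))).coeff 0
      = (j.factorial : ℝ) * (p.comp (X + 1) - p).coeff j := by
    rw [Polynomial.coeff_iterate_derivative]
    simp [Nat.descFactorial_self, nsmul_eq_mul]
  rw [← h0, Polynomial.coeff_zero_eq_eval_zero, hsub]
  rw [eval_sub, iterate_derivative_comp_X_add_one, eval_comp]
  simp

lemma comp_sub_self (n1 n2 : ℕ) (h1 : 0 < n1) (h2 : 0 < n2) :
    (bp n1 * bp n2).comp (X + 1) - bp n1 * bp n2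
      = (n2 : ℝ[X]) * bp n1 * X ^ (n2 - 1) + (n1 : ℝ[X]) * bp n2 * X ^ (n1 - 1)
        + (n1 : ℝ[X]) * (n2 : ℝ[X]) * X ^ (n1 + n2 - 2) := by
  rw [mul_comp, bp_comp_X_add_one, bp_comp_X_add_one,
    show n1 + n2 - 2 = (n1 - 1) + (n2 - 1) by omega, pow_add]
  ring

lemma coeff_term (c : ℕ) (p : ℝ[X]) (e j : ℕ) :
    ((c : ℝ[X]) * p * X ^ e).coeff j
      = if e ≤ j then (c : ℝ) * p.coeff (j - e) else 0 := by
  rw [Polynomial.coeff_mul_X_pow']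
  split_ifs with h
  · rw [← Polynomial.C_eq_natCast, coeff_C_mul]
  · rfl

lemma coeff_term3 (n1 n2 e j : ℕ) :
    ((n1 : ℝ[X]) * (n2 : ℝ[X]) * X ^ e).coeff j
      = (n1 : ℝ) * (n2 : ℝ) * (if j = e then 1 else 0) := by
  rw [Polynomial.coeff_mul_X_pow']
  split_ifs with h h2 h3
  · rw [← Polynomial.C_eq_natCast, ← Polynomial.C_eq_natCast, ← C_mul, coeff_C]
    have : j - e = 0 := by omega
    simp [this, h2]
  · rw [← Polynomial.C_eq_natCast, ← Polynomial.C_eq_natCast, ← C_mul, coeff_C]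
    have : ¬ (j - e = 0) := by omega
    simp [this]
  · omega
  · simp

lemma Dj (n1 n2 : ℕ) (h1 : 0 < n1) (h2 : 0 < n2) (j : ℕ) (hj : j ≤ n1 + n2 - 1) :
    (derivative^[j] (bp n1 * bp n2)).eval 1 - (derivative^[j] (bp n1 * bp n2)).eval 0
      = (j.factorial : ℝ) *
        ((((n2:ℝ) * (n1.choose (n1+n2-1-j) : ℝ) + (n1:ℝ) * (n2.choose (n1+n2-1-j) : ℝ))
            * bn (n1+n2-1-j))
          + (n1:ℝ) * (n2:ℝ) * (if n1+n2-1-j = 1 then 1 else 0)) := by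
  rw [eval_diff_iterate, comp_sub_self n1 n2 h1 h2]
  congr 1
  rw [coeff_add, coeff_add, coeff_term, coeff_term, coeff_term3]
  have t1 : (if n2-1 ≤ j then (n2:ℝ) * (bp n1).coeff (j-(n2-1)) else 0)
      = (n2:ℝ) * (n1.choose (n1+n2-1-j) : ℝ) * bn (n1+n2-1-j) := by
    split_ifs with h
    · rw [coeff_bp, if_pos (by omega : j - (n2-1) ≤ n1)]
      have e1 : n1 - (j - (n2-1)) = n1+n2-1-j := by omega
      have e2 : n1.choose (n1+n2-1-j) = n1.choose (j - (n2-1)) := by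
        rw [← e1, Nat.choose_symm (by omega : j - (n2-1) ≤ n1)]
      rw [e1, e2]; ring
    · rw [Nat.choose_eq_zero_of_lt (by omega : n1 < n1+n2-1-j)]
      simp
  have t2 : (if n1-1 ≤ j then (n1:ℝ) * (bp n2).coeff (j-(n1-1)) else 0)
      = (n1:ℝ) * (n2.choose (n1+n2-1-j) : ℝ) * bn (n1+n2-1-j) := by
    split_ifs with h
    · rw [coeff_bp, if_pos (by omega : j - (n1-1) ≤ n2)]
      have e1 : n2 - (j - (n1-1)) = n1+n2-1-j := by omega
      have e2 : n2.choose (n1+n2-1-j) = n2.choose (j - (n1-1)) := by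
        rw [← e1, Nat.choose_symm (by omega : j - (n1-1) ≤ n2)]
      rw [e1, e2]; ring
    · rw [Nat.choose_eq_zero_of_lt (by omega : n2 < n1+n2-1-j)]
      simp
  have t3 : (if j = n1+n2-2 then (1:ℝ) else 0) = (if n1+n2-1-j = 1 then 1 else 0) := by
    have : (j = n1+n2-2) ↔ (n1+n2-1-j = 1) := by omega
    simp [this]
  rw [t1, t2, ← t3]
  ring

lemma Dtop (n1 n2 : ℕ) (h1 : 0 < n1) (h2 : 0 < n2) :
    (derivative^[n1+n2] (bp n1 * bp n2)).eval 1
      - (derivative^[n1+n2] (bp n1 * bp n2)).eval 0 = 0 := by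
  rw [eval_diff_iterate, comp_sub_self n1 n2 h1 h2]
  rw [coeff_add, coeff_add, coeff_term, coeff_term, coeff_term3]
  rw [if_pos (by omega : n2-1 ≤ n1+n2), if_pos (by omega : n1-1 ≤ n1+n2),
    if_neg (by omega : ¬ (n1+n2 = n1+n2-2)), coeff_bp, coeff_bp,
    if_neg (by omega : ¬ (n1+n2-(n2-1) ≤ n1)), if_neg (by omega : ¬ (n1+n2-(n1-1) ≤ n2))]
  ring

lemma sum_even_only (h : ℕ → ℝ) (hodd : ∀ r, r % 2 = 1 → h r = 0) (N : ℕ) :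
    ∑ r ∈ range N, h r = ∑ k ∈ range ((N+1)/2), h (2*k) := by
  induction N with
  | zero => simp
  | succ N ih =>
      rw [Finset.sum_range_succ, ih]
      rcases Nat.even_or_odd N with he | ho
      · have h2 : 2 ∣ N := he.two_dvd
        rw [show (N+1+1)/2 = (N+1)/2 + 1 by omega, Finset.sum_range_succ,
          show 2*((N+1)/2) = N by omega]
      · rw [show (N+1+1)/2 = (N+1)/2 by
            have := Nat.odd_iff.mp ho; omega,
          hodd N (Nat.odd_iff.mp ho), add_zero]

lemma bn_one : bn 1 = -1/2 := by
  rw [bn, _root_.bernoulli_one]; norm_num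

lemma bn_odd_eq_zero (r : ℕ) (hr : r % 2 = 1) (hr1 : r ≠ 1) : bn r = 0 := by
  rw [bn, bernoulli_eq_bernoulli'_of_ne_one hr1,
    bernoulli'_eq_zero_of_odd (Nat.odd_iff.mpr hr) (by omega)]
  simp


lemma natDegree_bp_le (n : ℕ) : (bp n).natDegree ≤ n := by
  rw [Polynomial.natDegree_le_iff_coeff_eq_zero]
  intro m hm
  rw [coeff_bp, if_neg (by omega)]

lemma negpow_congr (a b : ℕ) (h : a % 2 = b % 2) : (-1:ℝ)^a = (-1:ℝ)^b := by
  rcases Nat.even_or_odd a with ha | ha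
  · rw [ha.neg_one_pow, (Nat.even_iff.mpr (by rw [← Nat.even_iff.mp ha, h])).neg_one_pow]
  · rw [ha.neg_one_pow, (Nat.odd_iff.mpr (by rw [← h, Nat.odd_iff.mp ha])).neg_one_pow]

theorem integral_triple_bernoulli (n1 n2 n3 : ℕ) (h1 : 0 < n1) (h2 : 0 < n2) (h3 : 0 < n3)
    (h12 : 2 ≤ n1 + n2) :
    (∫ q in (0:ℝ)..1,
        (Polynomial.aeval q (Polynomial.bernoulli n1))
          * (Polynomial.aeval q (Polynomial.bernoulli n2))
          * (Polynomial.aeval q (Polynomial.bernoulli n3)))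
      = (-1) ^ (n3 + 1) * (Nat.factorial n3 : ℝ)
          * ∑ k ∈ Finset.range ((n1 + n2 - 1) / 2 + 1),
              ((n1 : ℝ) * (Nat.choose n2 (2 * k) : ℝ) + (n2 : ℝ) * (Nat.choose n1 (2 * k) : ℝ))
                * ((Nat.factorial (n1 + n2 - 2 * k - 1) : ℝ)
                    / (Nat.factorial (n1 + n2 + n3 - 2 * k) : ℝ))
                * ((bernoulli (2 * k) : ℚ) : ℝ)
                * ((bernoulli (n1 + n2 + n3 - 2 * k) : ℚ) : ℝ) := by
  have hae : ∀ (n : ℕ) (q : ℝ),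
      (Polynomial.aeval q) (Polynomial.bernoulli n) = (bp n).eval q := by
    intro n q; rw [bp, eval_map, aeval_def]
  set N := n1 + n2 with hN
  have step1 : (∫ q in (0:ℝ)..1,
        (Polynomial.aeval q (Polynomial.bernoulli n1))
          * (Polynomial.aeval q (Polynomial.bernoulli n2))
          * (Polynomial.aeval q (Polynomial.bernoulli n3)))
      = ∫ x in (0:ℝ)..1, (bp n1 * bp n2).eval x * (bp n3).eval x := by
    apply intervalIntegral.integral_congr
    intro q _
    simp only [hae, eval_mul]
  rw [step1]
  have hdeg : (bp n1 * bp n2).natDegree ≤ N :=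
    natDegree_mul_le.trans (add_le_add (natDegree_bp_le n1) (natDegree_bp_le n2))
  rw [stepA N (bp n1 * bp n2) hdeg n3 h3]
  rw [Finset.sum_range_succ, Dtop n1 n2 h1 h2]
  rw [mul_zero, zero_mul, add_zero]
  set S : ℕ → ℝ := fun r => (-1:ℝ)^(N-1-r) * ((n3.factorial : ℝ) / ((n3+N-r).factorial : ℝ))
          * ((N-1-r).factorial : ℝ)
          * (((n2:ℝ) * (n1.choose r : ℝ) + (n1:ℝ) * (n2.choose r : ℝ)) * bn r
              + (n1:ℝ) * (n2:ℝ) * (if r = 1 then 1 else 0))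
          * bn (n3+N-r) with hS
  have step4 : ∀ j ∈ range N,
      (-1:ℝ)^j * ((n3.factorial : ℝ) / ((n3+j+1).factorial : ℝ)) *
        ((derivative^[j] (bp n1 * bp n2)).eval 1 - (derivative^[j] (bp n1 * bp n2)).eval 0)
        * bn (n3+j+1)
      = S (N-1-j) := by
    intro j hj
    rw [Finset.mem_range] at hj
    rw [Dj n1 n2 h1 h2 j (by omega)]
    have e1 : N - 1 - (N - 1 - j) = j := by omega
    have e2 : n3 + N - (N-1-j) = n3 + j + 1 := by omega
    simp only [hS, e1, e2]
    ring
  rw [Finset.sum_congr rfl step4, Finset.sum_range_reflect S N]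
  have hodd : ∀ r, r % 2 = 1 → S r = 0 := by
    intro r hr
    rcases eq_or_ne r 1 with rfl | hr1
    · simp only [hS]
      rw [if_true, bn_one, Nat.choose_one_right, Nat.choose_one_right]
      ring
    · simp only [hS, bn_odd_eq_zero r hr hr1, if_neg hr1, mul_zero, add_zero, zero_mul]
  rw [sum_even_only S hodd N, show (N+1)/2 = (N-1)/2 + 1 by omega]
  rw [Finset.mul_sum]
  apply Finset.sum_congr rfl
  intro k hk
  rw [Finset.mem_range] at hk
  have h2k : 2 * k ≤ N - 1 := by omega
  simp only [hS]
  rw [if_neg (by omega : ¬ (2*k = 1))]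
  have e3 : n3 + N - 2*k = N + n3 - 2*k := by omega
  have e4 : N - 1 - 2*k = N - 2*k - 1 := by omega
  rw [e3, e4]
  have hM : N + n3 - 2*k ≠ 1 := by omega
  rcases Nat.even_or_odd (N + n3 - 2*k) with hev | hod
  · have hsign : (-1:ℝ)^(N-2*k-1) = (-1:ℝ)^(n3+1) := by
      apply negpow_congr
      have := Nat.even_iff.mp hev
      omega
    rw [hsign]
    simp only [bn]
    ring
  · rw [bn_odd_eq_zero _ (Nat.odd_iff.mp hod) hM]
    simp only [bn]
    rw [show ((bernoulli (N+n3-2*k) : ℚ) : ℝ) = bn (N+n3-2*k) from rfl,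
      bn_odd_eq_zero _ (Nat.odd_iff.mp hod) hM]
    ring

end CarlitzTriple
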